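/- arXiv:0811.1003 — 2 statements merged into one kernel-verified Lean document; each statement's English description precedes it below -/
import Mathlib

section
/- If x : [0,∞) → ℝ^{P(F)} is differentiable with x'(t) = v(x(t)) for all t ≥ 0, then for all t ≥ 0 one has Σ_{A ⊆ F} x^A(t) = Σ_{A ⊆ F} x^A(0) + t · Σ_{A ⊆ F} α^A − δ ∫₀ᵗ x^F(s) ds; in particular, in the closed conservative case (α ≡ 0 and δ = 0) the total mass Σ_{A ⊆ F} x^A(t) is constant in t. -/
open Finset

/-- The fluid vector field `v` of the BitTorrent model, with components indexed by
subsets `A ⊆ F` (the full file `F` being `Finset.univ` of the chunk type `ι`). -/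
noncomputable def vfield {ι : Type*} [Fintype ι] [DecidableEq ι]
    (α : Finset ι → ℝ) (β γ δ : ℝ) (x : Finset ι → ℝ) (A : Finset ι) : ℝ :=
  α A
    - x A * (β * (∑ B ∈ univ.filter (fun B => A ⊂ B), x B)
             + γ * (∑ B ∈ univ.filter (fun B => ¬ A ⊆ B ∧ ¬ B ⊆ A), x B))
    + β * ∑ B ∈ univ.filter (fun B => A ⊆ B),
        (∑ a ∈ A, x (A.erase a)) * x B / (1 + ((B \ A).card : ℝ))
    + γ * ∑ B ∈ univ.filter (fun B => ¬ A ⊆ B),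
        (∑ a ∈ A ∩ B, x (A.erase a)) * x B / (1 + ((B \ A).card : ℝ))
    - δ * x univ * (if A = univ then 1 else 0)

lemma key_reindex {ι : Type*} [Fintype ι] [DecidableEq ι] (x : Finset ι → ℝ) (B : Finset ι)
    (p : Finset ι → Prop) [DecidablePred p]
    (hp : ∀ C a, a ∈ B → a ∉ C → (p (insert a C) ↔ p C)) :
    ∑ A ∈ univ.filter p, ∑ a ∈ A ∩ B, x (A.erase a) * x B / (1 + ((B \ A).card : ℝ))
      = ∑ A ∈ univ.filter (fun A => p A ∧ ¬ B ⊆ A), x A * x B := by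
  rw [Finset.sum_sigma' (univ.filter p) (fun A => A ∩ B)]
  have step : ∑ q ∈ (univ.filter p).sigma (fun A => A ∩ B),
        x (q.1.erase q.2) * x B / (1 + ((B \ q.1).card : ℝ))
      = ∑ q ∈ (univ.filter p).sigma (fun C => B \ C),
        x q.1 * x B / (((B \ q.1).card : ℝ)) := by
    apply Finset.sum_bij' (fun q _ => (⟨q.1.erase q.2, q.2⟩ : Σ _ : Finset ι, ι))
      (fun q _ => (⟨insert q.2 q.1, q.2⟩ : Σ _ : Finset ι, ι))
    · -- hi
      rintro ⟨A, a⟩ hq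
      simp only [mem_sigma, mem_filter, mem_univ, true_and, mem_inter] at hq ⊢
      obtain ⟨hpA, haA, haB⟩ := hq
      have hnot : a ∉ A.erase a := notMem_erase a A
      have : p (insert a (A.erase a)) ↔ p (A.erase a) := hp _ a haB hnot
      rw [insert_erase haA] at this
      refine ⟨this.mp hpA, mem_sdiff.mpr ⟨haB, hnot⟩⟩
    · -- hj
      rintro ⟨C, a⟩ hq
      simp only [mem_sigma, mem_filter, mem_univ, true_and, mem_sdiff, mem_inter] at hq ⊢
      obtain ⟨hpC, haB, haC⟩ := hq
      exact ⟨(hp C a haB haC).mpr hpC, mem_insert_self a C, haB⟩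
    · rintro ⟨A, a⟩ hq
      simp only [mem_sigma, mem_filter, mem_univ, true_and, mem_inter] at hq
      simp [insert_erase hq.2.1]
    · rintro ⟨C, a⟩ hq
      simp only [mem_sigma, mem_filter, mem_univ, true_and, mem_sdiff] at hq
      simp [erase_insert hq.2.2]
    · rintro ⟨A, a⟩ hq
      simp only [mem_sigma, mem_filter, mem_univ, true_and, mem_inter] at hq
      obtain ⟨hpA, haA, haB⟩ := hq
      have h1 : B \ A.erase a = insert a (B \ A) := by
        ext b
        simp only [mem_sdiff, mem_erase, mem_insert]
        by_cases hb : b = a <;> simp [hb, haB, haA]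
      have h2 : a ∉ B \ A := by simp [haA]
      rw [h1, card_insert_of_notMem h2]
      push_cast
      ring_nf
  rw [step, ← Finset.sum_sigma' (univ.filter p) (fun C => B \ C) (fun C _a => x C * x B / (((B \ C).card : ℝ)))]
  have hfin : ∀ C ∈ univ.filter p,
      ∑ _a ∈ B \ C, x C * x B / (((B \ C).card : ℝ))
        = if ¬ B ⊆ C then x C * x B else 0 := by
    intro C _
    rcases eq_or_ne (B \ C) ∅ with h | h
    · have hBC : B ⊆ C := sdiff_eq_empty_iff_subset.mp h
      simp [h, hBC]
    · have hBC : ¬ B ⊆ C := by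
        intro hsub
        exact h (sdiff_eq_empty_iff_subset.mpr hsub)
      have hcard : ((B \ C).card : ℝ) ≠ 0 := by
        exact_mod_cast card_ne_zero_of_mem (Finset.nonempty_iff_ne_empty.mpr h).choose_spec
      rw [Finset.sum_const, nsmul_eq_mul, mul_div_assoc', mul_comm, mul_div_assoc, div_self hcard, mul_one]
      simp [hBC]
  rw [Finset.sum_congr rfl hfin, ← Finset.sum_filter, Finset.filter_filter]

lemma swap_filter_sum {ι : Type*} [Fintype ι] [DecidableEq ι]
    (q : Finset ι → Finset ι → Prop) [DecidableRel q] (g : Finset ι → Finset ι → ℝ) :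
    ∑ A : Finset ι, ∑ B ∈ univ.filter (fun B => q A B), g A B
      = ∑ B : Finset ι, ∑ A ∈ univ.filter (fun A => q A B), g A B := by
  simp only [Finset.sum_filter]
  exact Finset.sum_comm

lemma sum_vfield {ι : Type*} [Fintype ι] [DecidableEq ι]
    (α : Finset ι → ℝ) (β γ δ : ℝ) (x : Finset ι → ℝ) :
    ∑ A : Finset ι, vfield α β γ δ x A = (∑ A : Finset ι, α A) - δ * x univ := by
  have hβ : ∑ A : Finset ι, ∑ B ∈ univ.filter (fun B => A ⊆ B),
        (∑ a ∈ A, x (A.erase a)) * x B / (1 + ((B \ A).card : ℝ))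
      = ∑ A : Finset ι, x A * ∑ B ∈ univ.filter (fun B => A ⊂ B), x B := by
    have l1 : ∀ A : Finset ι, ∑ B ∈ univ.filter (fun B => A ⊆ B),
          (∑ a ∈ A, x (A.erase a)) * x B / (1 + ((B \ A).card : ℝ))
        = ∑ B ∈ univ.filter (fun B => A ⊆ B),
            ∑ a ∈ A ∩ B, x (A.erase a) * x B / (1 + ((B \ A).card : ℝ)) := by
      intro A
      refine Finset.sum_congr rfl fun B hB => ?_
      simp only [mem_filter, mem_univ, true_and] at hB
      rw [inter_eq_left.mpr hB, Finset.sum_mul, Finset.sum_div]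
    simp only [l1]
    rw [swap_filter_sum (fun A B => A ⊆ B)
        (fun A B => ∑ a ∈ A ∩ B, x (A.erase a) * x B / (1 + ((B \ A).card : ℝ)))]
    have l2 : ∀ A : Finset ι, x A * ∑ B ∈ univ.filter (fun B => A ⊂ B), x B
        = ∑ B ∈ univ.filter (fun B => A ⊂ B), x A * x B := by
      intro A; rw [Finset.mul_sum]
    simp only [l2]
    rw [swap_filter_sum (fun A B => A ⊂ B) (fun A B => x A * x B)]
    · -- pointwise in B
      refine Finset.sum_congr rfl fun B _ => ?_
      rw [key_reindex x B (fun A => A ⊆ B)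
        (fun C a haB haC => by simp [Finset.insert_subset_iff, haB])]
      apply Finset.sum_congr
      · apply Finset.filter_congr
        intro A _
        exact (ssubset_iff_subset_not_subset).symm
      · intros; rfl
  have hγ : ∑ A : Finset ι, ∑ B ∈ univ.filter (fun B => ¬ A ⊆ B),
        (∑ a ∈ A ∩ B, x (A.erase a)) * x B / (1 + ((B \ A).card : ℝ))
      = ∑ A : Finset ι, x A * ∑ B ∈ univ.filter (fun B => ¬ A ⊆ B ∧ ¬ B ⊆ A), x B := by
    have l1 : ∀ A : Finset ι, ∑ B ∈ univ.filter (fun B => ¬ A ⊆ B),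
          (∑ a ∈ A ∩ B, x (A.erase a)) * x B / (1 + ((B \ A).card : ℝ))
        = ∑ B ∈ univ.filter (fun B => ¬ A ⊆ B),
            ∑ a ∈ A ∩ B, x (A.erase a) * x B / (1 + ((B \ A).card : ℝ)) := by
      intro A
      refine Finset.sum_congr rfl fun B _ => ?_
      rw [Finset.sum_mul, Finset.sum_div]
    simp only [l1]
    rw [swap_filter_sum (fun A B => ¬ A ⊆ B)
        (fun A B => ∑ a ∈ A ∩ B, x (A.erase a) * x B / (1 + ((B \ A).card : ℝ)))]
    have l2 : ∀ A : Finset ι, x A * ∑ B ∈ univ.filter (fun B => ¬ A ⊆ B ∧ ¬ B ⊆ A), x B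
        = ∑ B ∈ univ.filter (fun B => ¬ A ⊆ B ∧ ¬ B ⊆ A), x A * x B := by
      intro A; rw [Finset.mul_sum]
    simp only [l2]
    rw [swap_filter_sum (fun A B => ¬ A ⊆ B ∧ ¬ B ⊆ A) (fun A B => x A * x B)]
    refine Finset.sum_congr rfl fun B _ => ?_
    exact key_reindex x B (fun A => ¬ A ⊆ B)
      (fun C a haB haC => by simp [Finset.insert_subset_iff, haB])
  have hδ : ∑ A : Finset ι, δ * x univ * (if A = univ then (1:ℝ) else 0) = δ * x univ := by
    simp [mul_ite, mul_one, mul_zero, Finset.sum_ite_eq']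
  unfold vfield
  simp only [Finset.sum_sub_distrib, Finset.sum_add_distrib, hδ]
  rw [← Finset.mul_sum, ← Finset.mul_sum, hβ, hγ]
  have expand : ∑ A : Finset ι,
      x A * (β * (∑ B ∈ univ.filter (fun B => A ⊂ B), x B)
             + γ * (∑ B ∈ univ.filter (fun B => ¬ A ⊆ B ∧ ¬ B ⊆ A), x B))
      = β * ∑ A : Finset ι, x A * ∑ B ∈ univ.filter (fun B => A ⊂ B), x B
        + γ * ∑ A : Finset ι, x A * ∑ B ∈ univ.filter (fun B => ¬ A ⊆ B ∧ ¬ B ⊆ A), x B := by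
    rw [Finset.mul_sum, Finset.mul_sum, ← Finset.sum_add_distrib]
    refine Finset.sum_congr rfl fun A _ => ?_
    ring
  rw [expand]
  ring

/-- Mass balance along trajectories of the fluid ODE:
`Σ_A x^A(t) = Σ_A x^A(0) + t Σ_A α^A − δ ∫₀ᵗ x^F(s) ds`; in particular in the closed
conservative case (`α ≡ 0`, `δ = 0`) the total mass is constant. -/
theorem total_mass_balance
    {ι : Type*} [Fintype ι] [Nonempty ι] [DecidableEq ι]
    (α : Finset ι → ℝ) (hα : ∀ A, 0 ≤ α A)
    (β γ δ : ℝ) (hβ : 0 < β) (hγ : 0 ≤ γ) (hδ : 0 ≤ δ)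
    (x : ℝ → Finset ι → ℝ)
    (hx : ∀ t : ℝ, 0 ≤ t → HasDerivAt x (vfield α β γ δ (x t)) t) :
    (∀ t : ℝ, 0 ≤ t →
      ∑ A : Finset ι, x t A
        = (∑ A : Finset ι, x 0 A) + t * (∑ A : Finset ι, α A)
            - δ * ∫ s in (0 : ℝ)..t, x s univ) ∧
    ((∀ A : Finset ι, α A = 0) → δ = 0 →
      ∀ t : ℝ, 0 ≤ t → ∑ A : Finset ι, x t A = ∑ A : Finset ι, x 0 A) := by
  have main : ∀ t : ℝ, 0 ≤ t →
      ∑ A : Finset ι, x t A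
        = (∑ A : Finset ι, x 0 A) + t * (∑ A : Finset ι, α A)
            - δ * ∫ s in (0 : ℝ)..t, x s univ := by
    intro t ht
    set S : ℝ := ∑ A : Finset ι, α A with hS
    have hderiv : ∀ s ∈ Set.uIcc (0:ℝ) t,
        HasDerivAt (fun u => ∑ A : Finset ι, x u A) (S - δ * x s univ) s := by
      intro s hs
      rw [Set.uIcc_of_le ht] at hs
      have h1 := hasDerivAt_pi.mp (hx s hs.1)
      have h2 : HasDerivAt (fun u => ∑ A : Finset ι, x u A)
          (∑ A : Finset ι, vfield α β γ δ (x s) A) s :=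
        HasDerivAt.fun_sum (fun A _ => h1 A)
      rwa [sum_vfield] at h2
    have hcontx : ContinuousOn (fun s => x s univ) (Set.uIcc (0:ℝ) t) := by
      intro s hs
      rw [Set.uIcc_of_le ht] at hs
      exact (((continuous_apply (univ : Finset ι)).continuousAt).comp
        (hx s hs.1).continuousAt).continuousWithinAt
    have hint : IntervalIntegrable (fun s => S - δ * x s univ) MeasureTheory.volume 0 t :=
      (continuousOn_const.sub (continuousOn_const.mul hcontx)).intervalIntegrable
    have heq := intervalIntegral.integral_eq_sub_of_hasDerivAt hderiv hint
    have hsplit : (∫ s in (0:ℝ)..t, (S - δ * x s univ))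
        = t * S - δ * ∫ s in (0:ℝ)..t, x s univ := by
      rw [intervalIntegral.integral_sub intervalIntegrable_const
          ((continuousOn_const.mul hcontx).intervalIntegrable (u := fun s => δ * x s univ)),
        intervalIntegral.integral_const_mul, intervalIntegral.integral_const]
      simp [smul_eq_mul]
    rw [hsplit] at heq
    linarith
  refine ⟨main, fun hα0 hδ0 t ht => ?_⟩
  have h := main t ht
  have hz : (∑ A : Finset ι, α A) = 0 := Finset.sum_eq_zero (fun A _ => hα0 A)
  rw [hz, hδ0] at h
  simpa using h
end

section
/- For every x ∈ ℝ^{P(F)} and every G ⊆ F: Σ_{A',B,B' ⊆ F} μ_{G,B}(x) D(G,A',B,B') = γ x^G Σ_{B : B ≁ G} x^B. -/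
open Finset

/-- Swap rate `μ_{A,B}(x)`: nonzero only when `A ≁ B` (neither contains the other). -/
noncomputable def mu {ι : Type*} [DecidableEq ι]
    (γ : ℝ) (x : Finset ι → ℝ) (A B : Finset ι) : ℝ :=
  if ¬ A ⊆ B ∧ ¬ B ⊆ A then
    γ * x A * x B / (((A \ B).card : ℝ) * ((B \ A).card : ℝ))
  else 0

/-- The indicator `D(A,A',B,B') = 1(A ⊏ A', A'\A ⊆ B, B ⊏ B', B'\B ⊆ A)`. -/
def Dind {ι : Type*} [DecidableEq ι] (A A' B B' : Finset ι) : ℝ :=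
  if A ⊆ A' ∧ (A' \ A).card = 1 ∧ A' \ A ⊆ B ∧ B ⊆ B' ∧ (B' \ B).card = 1 ∧ B' \ B ⊆ A
  then 1 else 0

/-- Counting supersets of `G` by one element drawn from `C`. -/
lemma count_lemma {ι : Type*} [Fintype ι] [DecidableEq ι] (G C : Finset ι) :
    ∑ A' : Finset ι, (if G ⊆ A' ∧ (A' \ G).card = 1 ∧ A' \ G ⊆ C then (1:ℝ) else 0)
    = ((C \ G).card : ℝ) := by
  rw [Finset.sum_boole]
  congr 1
  have hset : univ.filter (fun A' : Finset ι => G ⊆ A' ∧ (A' \ G).card = 1 ∧ A' \ G ⊆ C)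
      = (C \ G).image (fun a => insert a G) := by
    ext A'
    simp only [mem_filter, mem_univ, true_and, mem_image, mem_sdiff]
    constructor
    · rintro ⟨h1, h2, h3⟩
      obtain ⟨a, ha⟩ := Finset.card_eq_one.mp h2
      have haA : a ∈ A' \ G := ha ▸ Finset.mem_singleton_self a
      rw [Finset.mem_sdiff] at haA
      refine ⟨a, ⟨h3 (ha ▸ Finset.mem_singleton_self a), haA.2⟩, ?_⟩
      have : A' = G ∪ (A' \ G) := (Finset.union_sdiff_of_subset h1).symm
      rw [this, ha]
      rw [Finset.union_comm, Finset.insert_eq]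
    · rintro ⟨a, ⟨haC, haG⟩, rfl⟩
      have hd : insert a G \ G = {a} := by
        ext b; simp only [Finset.mem_sdiff, Finset.mem_insert, Finset.mem_singleton]
        constructor
        · rintro ⟨hb | hb, hb2⟩
          · exact hb
          · exact absurd hb hb2
        · rintro rfl; exact ⟨Or.inl rfl, haG⟩
      refine ⟨Finset.subset_insert _ _, by rw [hd]; simp, by rw [hd]; simpa⟩
  rw [hset]
  rw [Finset.card_image_of_injOn]
  intro a ha b hb h
  rw [Finset.mem_coe, Finset.mem_sdiff] at ha hb
  have h2 : insert a G = insert b G := h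
  have : a ∈ insert b G := by rw [← h2]; exact Finset.mem_insert_self a G
  rcases Finset.mem_insert.mp this with h' | h'
  · exact h'
  · exact absurd h' ha.2

/-- The indicator factorizes into an `A'` part and a `B'` part. -/
lemma Dind_eq {ι : Type*} [DecidableEq ι] (G A' B B' : Finset ι) :
    Dind G A' B B' =
      (if G ⊆ A' ∧ (A' \ G).card = 1 ∧ A' \ G ⊆ B then (1:ℝ) else 0) *
      (if B ⊆ B' ∧ (B' \ B).card = 1 ∧ B' \ B ⊆ G then (1:ℝ) else 0) := by
  unfold Dind
  by_cases h1 : G ⊆ A' ∧ (A' \ G).card = 1 ∧ A' \ G ⊆ B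
  · by_cases h2 : B ⊆ B' ∧ (B' \ B).card = 1 ∧ B' \ B ⊆ G
    · rw [if_pos ⟨h1.1, h1.2.1, h1.2.2, h2.1, h2.2.1, h2.2.2⟩, if_pos h1, if_pos h2]; norm_num
    · rw [if_neg (by tauto), if_pos h1, if_neg h2, mul_zero]
  · rw [if_neg (by tauto), if_neg h1, zero_mul]

/-- `Σ_{A',B,B'} μ_{G,B}(x) D(G,A',B,B') = γ x^G Σ_{B ≁ G} x^B`. -/
theorem sum_mu_from
    {ι : Type*} [Fintype ι] [Nonempty ι] [DecidableEq ι]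
    (γ : ℝ) (hγ : 0 ≤ γ) (x : Finset ι → ℝ) (G : Finset ι) :
    ∑ A' : Finset ι, ∑ B : Finset ι, ∑ B' : Finset ι, mu γ x G B * Dind G A' B B'
      = γ * x G * ∑ B ∈ univ.filter (fun B => ¬ B ⊆ G ∧ ¬ G ⊆ B), x B := by
  rw [Finset.sum_comm]
  have key : ∀ B : Finset ι,
      ∑ A' : Finset ι, ∑ B' : Finset ι, mu γ x G B * Dind G A' B B'
        = mu γ x G B * (((B \ G).card : ℝ) * ((G \ B).card : ℝ)) := by
    intro B
    simp_rw [Dind_eq, ← mul_assoc, ← Finset.mul_sum, count_lemma, ← Finset.sum_mul,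
      ← Finset.mul_sum, count_lemma]
  simp_rw [key]
  rw [Finset.mul_sum, Finset.sum_filter]
  apply Finset.sum_congr rfl
  intro B _
  unfold mu
  by_cases h : ¬ B ⊆ G ∧ ¬ G ⊆ B
  · rw [if_pos ⟨h.2, h.1⟩, if_pos h]
    have h1 : ((G \ B).card : ℝ) ≠ 0 := by
      simp only [ne_eq, Nat.cast_eq_zero, Finset.card_eq_zero, Finset.sdiff_eq_empty_iff_subset]
      exact h.2
    have h2 : ((B \ G).card : ℝ) ≠ 0 := by
      simp only [ne_eq, Nat.cast_eq_zero, Finset.card_eq_zero, Finset.sdiff_eq_empty_iff_subset]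
      exact h.1
    rw [mul_comm (((B \ G).card : ℝ)), div_mul_cancel₀ _ (mul_ne_zero h1 h2)]
  · rw [if_neg (by tauto), if_neg h, zero_mul]
end
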